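/- For every finite nonempty set I, the collection of all downsets of the poset ℕ^I (functions I → ℕ ordered pointwise by ≤) has cardinality exactly ℵ₀. -/

import Mathlib

/-- The set of minimal elements of the complement of `X`. -/
def minCompl {α : Type*} [Preorder α] (X : Set α) : Set α :=
  {x | x ∉ X ∧ ∀ y, y < x → y ∈ X}

lemma minCompl_antichain {α : Type*} [PartialOrder α] (X : Set α) :
    IsAntichain (· ≤ ·) (minCompl X) := by
  intro a ha b hb hne hab
  exact ha.1 (hb.2 a (lt_of_le_of_ne hab hne))

lemma pi_nat_isPWO {I : Type*} [Finite I] (s : Set (I → ℕ)) : s.IsPWO := by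
  exact Set.isPWO_of_wellQuasiOrderedLE s

lemma compl_eq_of_lower {I : Type*} [Finite I] {X : Set (I → ℕ)} (hX : IsLowerSet X) :
    Xᶜ = {x | ∃ m ∈ minCompl X, m ≤ x} := by
  have hwf : WellFounded ((· < ·) : (I → ℕ) → (I → ℕ) → Prop) := by
    have := (pi_nat_isPWO (Set.univ : Set (I → ℕ))).wellFoundedOn
    rwa [Set.wellFoundedOn_univ] at this
  ext x
  constructor
  · intro hx
    obtain ⟨m, hm, hmin⟩ := hwf.has_min {y | y ∉ X ∧ y ≤ x} ⟨x, hx, le_refl x⟩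
    refine ⟨m, ⟨hm.1, fun y hy => ?_⟩, hm.2⟩
    by_contra hyX
    exact hmin y ⟨hyX, hy.le.trans hm.2⟩ hy
  · rintro ⟨m, hm, hmx⟩ hxX
    exact hm.1 (hX hmx hxX)

theorem mk_downsets_pi_nat_eq_aleph0
    {I : Type*} [Finite I] [Nonempty I] :
    Cardinal.mk {X : Set (I → ℕ) | IsLowerSet X} = Cardinal.aleph0 := by
  refine le_antisymm ?_ ?_
  · -- countable: inject into Finset (I → ℕ) via minimal elements of the complement
    have hfin : ∀ X : {X : Set (I → ℕ) | IsLowerSet X}, (minCompl X.1).Finite := fun X =>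
      (minCompl_antichain X.1).finite_of_partiallyWellOrderedOn (pi_nat_isPWO _)
    have hinj : Function.Injective (fun X : {X : Set (I → ℕ) | IsLowerSet X} =>
        (hfin X).toFinset) := by
      intro X Y h
      have : minCompl X.1 = minCompl Y.1 := by
        have := congrArg (fun s : Finset (I → ℕ) => (s : Set (I → ℕ))) h
        simpa using this
      have hc : (X.1)ᶜ = (Y.1)ᶜ := by
        rw [compl_eq_of_lower X.2, compl_eq_of_lower Y.2, this]
      exact Subtype.ext (compl_injective hc)
    have : Countable {X : Set (I → ℕ) | IsLowerSet X} := Countable.of_equiv _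
      (Equiv.ofInjective _ hinj).symm
    exact Cardinal.mk_le_aleph0
  · -- infinite: the principal lower sets of constant functions are distinct
    have hinj : Function.Injective (fun n : ℕ =>
        (⟨{y : I → ℕ | ∀ i, y i ≤ n}, fun a b hba ha i => (hba i).trans (ha i)⟩ :
          {X : Set (I → ℕ) | IsLowerSet X})) := by
      intro n m h
      have h' : {y : I → ℕ | ∀ i, y i ≤ n} = {y : I → ℕ | ∀ i, y i ≤ m} :=
        congrArg Subtype.val h
      by_contra hne
      obtain ⟨i⟩ := ‹Nonempty I›
      rcases lt_or_gt_of_ne hne with hlt | hlt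
      · have : (fun _ : I => m) ∈ {y : I → ℕ | ∀ i, y i ≤ n} := h' ▸ fun i => le_refl m
        exact absurd (this i) (not_le.mpr hlt)
      · have : (fun _ : I => n) ∈ {y : I → ℕ | ∀ i, y i ≤ m} := h' ▸ fun i => le_refl n
        exact absurd (this i) (not_le.mpr hlt)
    have : Infinite {X : Set (I → ℕ) | IsLowerSet X} := Infinite.of_injective _ hinj
    exact Cardinal.aleph0_le_mk _
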